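/- Let G be a 3-γc-critical graph, S a minimum vertex cut of G, and suppose G − S has two parts H1 and H2 (each a union of components) with |H1| ≥ 2 and |H2| ≥ 2. Let I be an independent set of G with |I ∩ (H1 ∪ H2)| = p ≥ 3. Then |S \ I| ≥ p − 1. -/

import Mathlib

open SimpleGraph Finset

variable {V : Type*}

/-- The graph `G` with the extra edge `uv` added. -/
def SimpleGraph.addEdge (G : SimpleGraph V) (u v : V) : SimpleGraph V :=
  G ⊔ SimpleGraph.fromEdgeSet {s(u, v)}

/-- `D` is a connected dominating set of `G`. -/
def SimpleGraph.IsCDS (G : SimpleGraph V) (D : Set V) : Prop :=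
  (∀ v : V, v ∈ D ∨ ∃ u ∈ D, G.Adj u v) ∧ (G.induce D).Connected

/-- The connected domination number. -/
noncomputable def SimpleGraph.cdn [Fintype V] (G : SimpleGraph V) : ℕ :=
  sInf {n | ∃ D : Finset V, D.card = n ∧ G.IsCDS ↑D}

/-- `G` is a `3`-`γ_c`-critical graph. -/
def SimpleGraph.IsCritical3 [Fintype V] (G : SimpleGraph V) : Prop :=
  G.Connected ∧ G.cdn = 3 ∧
    ∀ u v : V, u ≠ v → ¬G.Adj u v → (G.addEdge u v).cdn < 3

/-- `s` is an independent set of `G`. -/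
def SimpleGraph.IsIndepSet' (G : SimpleGraph V) (s : Set V) : Prop :=
  s.Pairwise (fun a b => ¬G.Adj a b)

/-- The independence number. -/
noncomputable def SimpleGraph.indepNum' [Fintype V] (G : SimpleGraph V) : ℕ :=
  sSup {n | ∃ s : Finset V, G.IsIndepSet' ↑s ∧ s.card = n}

/-- `S` is a vertex cut: removing it leaves a non-connected graph. -/
def SimpleGraph.IsVertexCut [Fintype V] (G : SimpleGraph V) (S : Finset V) : Prop :=
  ¬(G.induce ((↑S : Set V)ᶜ)).Connected

/-- The vertex connectivity: minimum size of a vertex cut. -/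
noncomputable def SimpleGraph.conn [Fintype V] (G : SimpleGraph V) : ℕ :=
  sInf {n | ∃ S : Finset V, S.card = n ∧ G.IsVertexCut S}

set_option linter.unusedSectionVars false

lemma addEdge_adj' (G : SimpleGraph V) (u v x y : V) :
    (G.addEdge u v).Adj x y ↔ G.Adj x y ∨ ((x = u ∧ y = v ∨ x = v ∧ y = u) ∧ x ≠ y) := by
  simp only [SimpleGraph.addEdge, sup_adj, fromEdgeSet_adj, Set.mem_singleton_iff, Sym2.eq_iff]

lemma addEdge_comm (G : SimpleGraph V) (u v : V) : G.addEdge u v = G.addEdge v u := by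
  unfold SimpleGraph.addEdge
  rw [Sym2.eq_swap]

lemma connected_induce_singleton (G : SimpleGraph V) (w : V) :
    (G.induce ({w} : Set V)).Connected := by
  rw [connected_iff]
  refine ⟨?_, ⟨⟨w, rfl⟩⟩⟩
  rintro ⟨x, hx⟩ ⟨y, hy⟩
  simp only [Set.mem_singleton_iff] at hx hy
  subst hx; subst hy
  exact Reachable.refl _

lemma connected_induce_pair {G : SimpleGraph V} {w1 w2 : V} (h : G.Adj w1 w2) :
    (G.induce ({w1, w2} : Set V)).Connected := by
  rw [connected_iff]
  have e : (G.induce ({w1, w2} : Set V)).Adj ⟨w1, by simp⟩ ⟨w2, by simp⟩ := h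
  refine ⟨?_, ⟨⟨w1, by simp⟩⟩⟩
  have hall : ∀ z : ({w1, w2} : Set V),
      z = (⟨w1, by simp⟩ : ({w1, w2} : Set V)) ∨ z = ⟨w2, by simp⟩ := by
    rintro ⟨z, hz⟩
    simp only [Set.mem_insert_iff, Set.mem_singleton_iff] at hz
    rcases hz with rfl | rfl
    · exact Or.inl rfl
    · exact Or.inr rfl
  intro x y
  rcases hall x with rfl | rfl <;> rcases hall y with rfl | rfl
  · exact Reachable.refl _
  · exact e.reachable
  · exact e.reachable.symm
  · exact Reachable.refl _

lemma adj_of_reachable_two {W : Type*} {K : SimpleGraph W} {x y : W}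
    (hxy : x ≠ y) (hall : ∀ z : W, z = x ∨ z = y) (h : K.Reachable x y) : K.Adj x y := by
  obtain ⟨p⟩ := h
  cases p with
  | nil => exact absurd rfl hxy
  | @cons _ w _ hadj p' =>
    rcases hall w with rfl | rfl
    · exact absurd hadj K.irrefl
    · exact hadj

lemma adj_of_connected_pair {G' : SimpleGraph V} {w1 w2 : V} (hne : w1 ≠ w2)
    (h : (G'.induce ({w1, w2} : Set V)).Connected) : G'.Adj w1 w2 := by
  have hr := h.preconnected ⟨w1, by simp⟩ ⟨w2, by simp⟩
  have hall : ∀ z : ({w1, w2} : Set V),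
      z = (⟨w1, by simp⟩ : ({w1, w2} : Set V)) ∨ z = ⟨w2, by simp⟩ := by
    rintro ⟨z, hz⟩
    simp only [Set.mem_insert_iff, Set.mem_singleton_iff] at hz
    rcases hz with rfl | rfl
    · exact Or.inl rfl
    · exact Or.inr rfl
  have : (G'.induce ({w1, w2} : Set V)).Adj ⟨w1, by simp⟩ ⟨w2, by simp⟩ :=
    adj_of_reachable_two (fun e => hne (congrArg Subtype.val e)) hall hr
  exact this

section fin
variable [Fintype V] [DecidableEq V] {G : SimpleGraph V} {S H1 H2 I : Finset V}

lemma no_small_cds (hG : G.IsCritical3) (D : Finset V) (hD : G.IsCDS ↑D) : 3 ≤ D.card := by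
  by_contra hcon
  push_neg at hcon
  have hle : G.cdn ≤ D.card := Nat.sInf_le ⟨D, rfl, hD⟩
  rw [hG.2.1] at hle
  omega

lemma exists_small_cds (hG : G.IsCritical3) {u v : V} (huv : u ≠ v) (hadj : ¬G.Adj u v) :
    ∃ D : Finset V, D.card ≤ 2 ∧ (G.addEdge u v).IsCDS ↑D := by
  have hconn : (G.addEdge u v).Connected := hG.1.mono le_sup_left
  have hne : {n | ∃ D : Finset V, D.card = n ∧ (G.addEdge u v).IsCDS ↑D}.Nonempty := by
    refine ⟨(Finset.univ : Finset V).card, Finset.univ, rfl, fun w => Or.inl (by simp), ?_⟩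
    rw [Finset.coe_univ]
    exact (induceUnivIso (G.addEdge u v)).connected_iff.mpr hconn
  obtain ⟨D, hDcard, hcds⟩ := Nat.sInf_mem hne
  have hlt := hG.2.2 u v huv hadj
  have : D.card < 3 := by rw [hDcard]; exact hlt
  exact ⟨D, by omega, hcds⟩

lemma helperCT (hG : G.IsCritical3)
    (hpart : ∀ z : V, z ∉ S ↔ (z ∈ H1 ∨ z ∈ H2))
    (hdisj : Disjoint H1 H2)
    (hsep : ∀ a ∈ H1, ∀ b ∈ H2, ¬G.Adj a b)
    (h1 : 2 ≤ H1.card) (h2 : 2 ≤ H2.card)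
    (hI : G.IsIndepSet' ↑I)
    {c m t : V} (hc : c ∈ I) (hcH : c ∈ H1 ∨ c ∈ H2)
    (hcm : c ≠ m) (htc : t ≠ c) (htm : t ≠ m)
    (hadjct : (G.addEdge c m).Adj c t)
    (hdom : ∀ z : V, z = c ∨ z = t ∨ (G.addEdge c m).Adj c z ∨ (G.addEdge c m).Adj t z) :
    t ∈ S ∧ t ∉ I ∧ G.Adj t c ∧ ¬ G.Adj t m ∧
      ∀ z, z ≠ m → (z = c ∨ z = t ∨ G.Adj c z ∨ G.Adj t z) := by
  have hGct : G.Adj c t := by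
    rcases (addEdge_adj' G c m c t).mp hadjct with h | ⟨h, _⟩
    · exact h
    · rcases h with ⟨_, rfl⟩ | ⟨rfl, _⟩
      · exact absurd rfl htm
      · exact absurd rfl hcm
  have dom' : ∀ z, z ≠ m → (z = c ∨ z = t ∨ G.Adj c z ∨ G.Adj t z) := by
    intro z hz
    rcases hdom z with h | h | h | h
    · exact Or.inl h
    · exact Or.inr (Or.inl h)
    · rcases (addEdge_adj' G c m c z).mp h with h' | ⟨h', _⟩
      · exact Or.inr (Or.inr (Or.inl h'))
      · rcases h' with ⟨_, rfl⟩ | ⟨rfl, _⟩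
        · exact absurd rfl hz
        · exact absurd rfl hcm
    · rcases (addEdge_adj' G c m t z).mp h with h' | ⟨h', _⟩
      · exact Or.inr (Or.inr (Or.inr h'))
      · rcases h' with ⟨rfl, _⟩ | ⟨rfl, _⟩
        · exact absurd rfl htc
        · exact absurd rfl htm
  have hnadj : ¬ G.Adj t m := by
    intro hadj
    have hcds : G.IsCDS ↑({c, t} : Finset V) := by
      constructor
      · intro z
        by_cases hz : z = m
        · subst hz
          exact Or.inr ⟨t, by simp, hadj⟩
        · rcases dom' z hz with rfl | rfl | h | h
          · exact Or.inl (by simp)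
          · exact Or.inl (by simp)
          · exact Or.inr ⟨c, by simp, h⟩
          · exact Or.inr ⟨t, by simp, h⟩
      · rw [Finset.coe_insert, Finset.coe_singleton]
        exact connected_induce_pair hGct
    have := no_small_cds hG _ hcds
    rw [Finset.card_insert_of_notMem (by simp [Ne.symm htc]), Finset.card_singleton] at this
    omega
  have htnI : t ∉ I := by
    intro htI
    exact hI (Finset.mem_coe.mpr htI) (Finset.mem_coe.mpr hc) htc hGct.symm
  have htS : t ∈ S := by
    rcases hcH with hc1 | hc2
    · obtain ⟨h, hhH2, hhm⟩ := Finset.exists_mem_ne (s := H2) (by omega) m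
      have hth2 : t ∉ H2 := fun ht2 => hsep c hc1 t ht2 hGct
      have hch : h ≠ c := fun e => (Finset.disjoint_left.mp hdisj hc1) (e ▸ hhH2)
      have hth1 : t ∉ H1 := by
        rcases dom' h hhm with rfl | rfl | hadj | hadj
        · exact absurd rfl hch
        · exact absurd hhH2 hth2
        · exact absurd hadj (hsep c hc1 h hhH2)
        · exact fun ht1 => hsep t ht1 h hhH2 hadj
      by_contra htS
      rcases (hpart t).mp htS with h' | h'
      · exact hth1 h'
      · exact hth2 h'
    · obtain ⟨h, hhH1, hhm⟩ := Finset.exists_mem_ne (s := H1) (by omega) m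
      have hth1 : t ∉ H1 := fun ht1 => hsep t ht1 c hc2 hGct.symm
      have hch : h ≠ c := fun e => (Finset.disjoint_left.mp hdisj (e ▸ hhH1)) hc2
      have hth2 : t ∉ H2 := by
        rcases dom' h hhm with rfl | rfl | hadj | hadj
        · exact absurd rfl hch
        · exact absurd hhH1 hth1
        · exact absurd hadj.symm (hsep h hhH1 c hc2)
        · exact fun ht2 => hsep h hhH1 t ht2 hadj.symm
      by_contra htS
      rcases (hpart t).mp htS with h' | h'
      · exact hth1 h'
      · exact hth2 h'
  exact ⟨htS, htnI, hGct.symm, hnadj, dom'⟩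


lemma pairCDS (hG : G.IsCritical3)
    (hpart : ∀ z : V, z ∉ S ↔ (z ∈ H1 ∨ z ∈ H2))
    (hdisj : Disjoint H1 H2)
    (hsep : ∀ a ∈ H1, ∀ b ∈ H2, ¬G.Adj a b)
    (h1 : 2 ≤ H1.card) (h2 : 2 ≤ H2.card)
    (hI : G.IsIndepSet' ↑I)
    {a b x3 : V} (ha : a ∈ I) (hb : b ∈ I) (h3 : x3 ∈ I)
    (haH : a ∈ H1 ∨ a ∈ H2) (hbH : b ∈ H1 ∨ b ∈ H2)
    (hab : a ≠ b) (h3a : x3 ≠ a) (h3b : x3 ≠ b) :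
    ∃ t c m, ((c = a ∧ m = b) ∨ (c = b ∧ m = a)) ∧ t ∈ S ∧ t ∉ I ∧
      G.Adj t c ∧ ¬ G.Adj t m ∧
      ∀ z, z ≠ m → (z = c ∨ z = t ∨ G.Adj c z ∨ G.Adj t z) := by
  have hnadjab : ¬ G.Adj a b := hI (Finset.mem_coe.mpr ha) (Finset.mem_coe.mpr hb) hab
  obtain ⟨D, hDle, hcds⟩ := exists_small_cds hG hab hnadjab
  have dom := hcds.1
  have conn := hcds.2
  have toG : ∀ x y : V, x ≠ a → x ≠ b → (G.addEdge a b).Adj x y → G.Adj x y := by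
    intro x y hxa hxb h
    rcases (addEdge_adj' G a b x y).mp h with h' | ⟨h', _⟩
    · exact h'
    · rcases h' with ⟨rfl, _⟩ | ⟨rfl, _⟩
      · exact absurd rfl hxa
      · exact absurd rfl hxb
  have toG2 : ∀ x y : V, y ≠ a → y ≠ b → (G.addEdge a b).Adj x y → G.Adj x y := by
    intro x y hya hyb h
    rcases (addEdge_adj' G a b x y).mp h with h' | ⟨h', _⟩
    · exact h'
    · rcases h' with ⟨_, rfl⟩ | ⟨_, rfl⟩
      · exact absurd rfl hyb
      · exact absurd rfl hya
  have hD012 : D.card = 0 ∨ D.card = 1 ∨ D.card = 2 := by omega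
  rcases hD012 with h0 | h1' | h2'
  · rw [Finset.card_eq_zero] at h0
    subst h0
    rcases dom a with h | ⟨u, hu, _⟩
    · simp at h
    · simp at hu
  · rw [Finset.card_eq_one] at h1'
    obtain ⟨w, rfl⟩ := h1'
    have domw : ∀ z : V, z = w ∨ (G.addEdge a b).Adj w z := by
      intro z
      rcases dom z with h | ⟨u, hu, h⟩
      · simp at h; exact Or.inl h
      · simp at hu; subst hu; exact Or.inr h
    exfalso
    by_cases hwa : w = a
    · subst hwa
      rcases haH with ha1 | ha2
      · obtain ⟨h', hh2, hhb⟩ := Finset.exists_mem_ne (s := H2) (by omega) b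
        have hha : h' ≠ w := fun e => (Finset.disjoint_left.mp hdisj ha1) (e ▸ hh2)
        rcases domw h' with e | hadj
        · exact hha e
        · exact hsep w ha1 h' hh2 (toG2 w h' (Ne.trans_eq hha rfl) hhb hadj)
      · obtain ⟨h', hh1, hhb⟩ := Finset.exists_mem_ne (s := H1) (by omega) b
        have hha : h' ≠ w := fun e => (Finset.disjoint_left.mp hdisj (e ▸ hh1)) ha2
        rcases domw h' with e | hadj
        · exact hha e
        · exact hsep h' hh1 w ha2 (toG2 w h' hha hhb hadj).symm
    · by_cases hwb : w = b
      · subst hwb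
        rcases hbH with hb1 | hb2
        · obtain ⟨h', hh2, hha⟩ := Finset.exists_mem_ne (s := H2) (by omega) a
          have hhw : h' ≠ w := fun e => (Finset.disjoint_left.mp hdisj hb1) (e ▸ hh2)
          rcases domw h' with e | hadj
          · exact hhw e
          · exact hsep w hb1 h' hh2 (toG2 w h' hha hhw hadj)
        · obtain ⟨h', hh1, hha⟩ := Finset.exists_mem_ne (s := H1) (by omega) a
          have hhw : h' ≠ w := fun e => (Finset.disjoint_left.mp hdisj (e ▸ hh1)) hb2
          rcases domw h' with e | hadj
          · exact hhw e
          · exact hsep h' hh1 w hb2 (toG2 w h' hha hhw hadj).symm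
      · have hcdsG : G.IsCDS ↑({w} : Finset V) := by
          constructor
          · intro z
            rcases domw z with rfl | hadj
            · exact Or.inl (by simp)
            · exact Or.inr ⟨w, by simp, toG w z hwa hwb hadj⟩
          · rw [Finset.coe_singleton]
            exact connected_induce_singleton G w
        have := no_small_cds hG _ hcdsG
        simp at this
  · obtain ⟨w1, w2, hw12, rfl⟩ := Finset.card_eq_two.mp h2'
    have hadjP : (G.addEdge a b).Adj w1 w2 := by
      apply adj_of_connected_pair hw12
      have := conn
      rwa [Finset.coe_insert, Finset.coe_singleton] at this
    have dom2 : ∀ z : V, z = w1 ∨ z = w2 ∨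
        (G.addEdge a b).Adj w1 z ∨ (G.addEdge a b).Adj w2 z := by
      intro z
      rcases dom z with h | ⟨u, hu, h⟩
      · simp only [Finset.coe_insert, Set.mem_insert_iff, Finset.coe_singleton,
          Set.mem_singleton_iff] at h
        tauto
      · simp only [Finset.coe_insert, Set.mem_insert_iff, Finset.coe_singleton,
          Set.mem_singleton_iff] at hu
        rcases hu with rfl | rfl
        · exact Or.inr (Or.inr (Or.inl h))
        · exact Or.inr (Or.inr (Or.inr h))
    have habD : ¬ ((w1 = a ∧ w2 = b) ∨ (w1 = b ∧ w2 = a)) := by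
      rintro (⟨rfl, rfl⟩ | ⟨rfl, rfl⟩)
      · rcases dom2 x3 with e | e | h | h
        · exact h3a e
        · exact h3b e
        · exact hI (Finset.mem_coe.mpr ha) (Finset.mem_coe.mpr h3) (Ne.symm h3a)
            (toG2 w1 x3 h3a h3b h)
        · exact hI (Finset.mem_coe.mpr hb) (Finset.mem_coe.mpr h3) (Ne.symm h3b)
            (toG2 w2 x3 h3a h3b h)
      · rcases dom2 x3 with e | e | h | h
        · exact h3b e
        · exact h3a e
        · exact hI (Finset.mem_coe.mpr hb) (Finset.mem_coe.mpr h3) (Ne.symm h3b)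
            (toG2 w1 x3 h3a h3b h)
        · exact hI (Finset.mem_coe.mpr ha) (Finset.mem_coe.mpr h3) (Ne.symm h3a)
            (toG2 w2 x3 h3a h3b h)
    have hcomm : G.addEdge a b = G.addEdge b a := addEdge_comm G a b
    by_cases hw1a : w1 = a
    · subst hw1a
      by_cases hw2b : w2 = b
      · exact absurd (Or.inl ⟨rfl, hw2b⟩) habD
      · have hw2a : w2 ≠ w1 := Ne.symm hw12
        obtain ⟨tS, tnI, hadjtc, hnadj, domfin⟩ :=
          helperCT hG hpart hdisj hsep h1 h2 hI ha haH hab hw2a hw2b hadjP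
            (fun z => dom2 z)
        exact ⟨w2, w1, b, Or.inl ⟨rfl, rfl⟩, tS, tnI, hadjtc, hnadj, domfin⟩
    · by_cases hw1b : w1 = b
      · subst hw1b
        by_cases hw2a : w2 = a
        · exact absurd (Or.inr ⟨rfl, hw2a⟩) habD
        · have hw2b : w2 ≠ w1 := Ne.symm hw12
          rw [hcomm] at hadjP dom2
          obtain ⟨tS, tnI, hadjtc, hnadj, domfin⟩ :=
            helperCT hG hpart hdisj hsep h1 h2 hI hb hbH (Ne.symm hab) hw2b hw2a hadjP
              (fun z => dom2 z)
          exact ⟨w2, w1, a, Or.inr ⟨rfl, rfl⟩, tS, tnI, hadjtc, hnadj, domfin⟩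
      · by_cases hw2a : w2 = a
        · subst hw2a
          have hdom' : ∀ z : V, z = w2 ∨ z = w1 ∨
              (G.addEdge w2 b).Adj w2 z ∨ (G.addEdge w2 b).Adj w1 z := by
            intro z
            rcases dom2 z with e | e | h | h
            · exact Or.inr (Or.inl e)
            · exact Or.inl e
            · exact Or.inr (Or.inr (Or.inr h))
            · exact Or.inr (Or.inr (Or.inl h))
          obtain ⟨tS, tnI, hadjtc, hnadj, domfin⟩ :=
            helperCT hG hpart hdisj hsep h1 h2 hI ha haH hab hw1a hw1b hadjP.symm hdom'
          exact ⟨w1, w2, b, Or.inl ⟨rfl, rfl⟩, tS, tnI, hadjtc, hnadj, domfin⟩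
        · by_cases hw2b : w2 = b
          · subst hw2b
            rw [hcomm] at hadjP dom2
            have hdom' : ∀ z : V, z = w2 ∨ z = w1 ∨
                (G.addEdge w2 a).Adj w2 z ∨ (G.addEdge w2 a).Adj w1 z := by
              intro z
              rcases dom2 z with e | e | h | h
              · exact Or.inr (Or.inl e)
              · exact Or.inl e
              · exact Or.inr (Or.inr (Or.inr h))
              · exact Or.inr (Or.inr (Or.inl h))
            obtain ⟨tS, tnI, hadjtc, hnadj, domfin⟩ :=
              helperCT hG hpart hdisj hsep h1 h2 hI hb hbH (Ne.symm hab) hw1b hw1a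
                hadjP.symm hdom'
            exact ⟨w1, w2, a, Or.inr ⟨rfl, rfl⟩, tS, tnI, hadjtc, hnadj, domfin⟩
          · exfalso
            have hG12 : G.Adj w1 w2 := toG w1 w2 hw1a hw1b hadjP
            have hcdsG : G.IsCDS ↑({w1, w2} : Finset V) := by
              constructor
              · intro z
                rcases dom2 z with rfl | rfl | h | h
                · exact Or.inl (by simp)
                · exact Or.inl (by simp)
                · exact Or.inr ⟨w1, by simp, toG w1 z hw1a hw1b h⟩
                · exact Or.inr ⟨w2, by simp, toG w2 z hw2a hw2b h⟩
              · rw [Finset.coe_insert, Finset.coe_singleton]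
                exact connected_induce_pair hG12
            have := no_small_cds hG _ hcdsG
            rw [Finset.card_insert_of_notMem (by simp [hw12]),
              Finset.card_singleton] at this
            omega


lemma countLemma (hG : G.IsCritical3)
    (hpart : ∀ z : V, z ∉ S ↔ (z ∈ H1 ∨ z ∈ H2))
    (hdisj : Disjoint H1 H2)
    (hsep : ∀ a ∈ H1, ∀ b ∈ H2, ¬G.Adj a b)
    (h1 : 2 ≤ H1.card) (h2 : 2 ≤ H2.card)
    (hI : G.IsIndepSet' ↑I)
    (hbig : 3 ≤ (I ∩ (H1 ∪ H2)).card) :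
    ∀ k : ℕ, 2 ≤ k → ∀ X' : Finset V, X' ⊆ I ∩ (H1 ∪ H2) → X'.card = k →
    ∃ T : Finset V, T.card + 1 = k ∧ ∀ t ∈ T, t ∈ S ∧ t ∉ I ∧
      ∃ c ∈ X', ∃ m ∈ X', c ≠ m ∧ G.Adj t c ∧ ¬ G.Adj t m ∧
        ∀ z, z ≠ m → (z = c ∨ z = t ∨ G.Adj c z ∨ G.Adj t z) := by
  -- common facts
  have memX : ∀ x ∈ I ∩ (H1 ∪ H2), x ∈ I ∧ (x ∈ H1 ∨ x ∈ H2) := by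
    intro x hx
    rw [Finset.mem_inter, Finset.mem_union] at hx
    exact hx
  have getPair : ∀ X' : Finset V, X' ⊆ I ∩ (H1 ∪ H2) → ∀ a ∈ X', ∀ b ∈ X', a ≠ b →
      ∃ t c m, ((c = a ∧ m = b) ∨ (c = b ∧ m = a)) ∧ t ∈ S ∧ t ∉ I ∧
        G.Adj t c ∧ ¬ G.Adj t m ∧
        ∀ z, z ≠ m → (z = c ∨ z = t ∨ G.Adj c z ∨ G.Adj t z) := by
    intro X' hsub a haX b hbX hab
    have haI := memX a (hsub haX)
    have hbI := memX b (hsub hbX)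
    have hss : ({a, b} : Finset V) ⊆ I ∩ (H1 ∪ H2) := by
      intro z hz
      rcases Finset.mem_insert.mp hz with rfl | hz
      · exact hsub haX
      · rw [Finset.mem_singleton] at hz
        exact hz ▸ hsub hbX
    have hcard2 : (({a, b} : Finset V)).card ≤ 2 :=
      (Finset.card_insert_le a {b}).trans (by simp)
    have hsd : 0 < ((I ∩ (H1 ∪ H2)) \ ({a, b} : Finset V)).card := by
      rw [Finset.card_sdiff_of_subset hss]
      omega
    obtain ⟨x3, hx3⟩ := Finset.card_pos.mp hsd
    rw [Finset.mem_sdiff] at hx3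
    have h3I := (memX x3 hx3.1).1
    have h3a : x3 ≠ a := fun e => hx3.2 (by simp [e])
    have h3b : x3 ≠ b := fun e => hx3.2 (by simp [e])
    exact pairCDS hG hpart hdisj hsep h1 h2 hI haI.1 hbI.1 h3I haI.2 hbI.2 hab h3a h3b
  intro k hk
  induction k, hk using Nat.le_induction with
  | base =>
    intro X' hsub hcard
    obtain ⟨a, b, hab, rfl⟩ := Finset.card_eq_two.mp hcard
    obtain ⟨t, c, m, hcm, tS, tnI, hadj, hnadj, hdomf⟩ :=
      getPair _ hsub a (by simp) b (by simp) hab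
    refine ⟨{t}, by simp, ?_⟩
    intro t' ht'
    rw [Finset.mem_singleton] at ht'
    subst ht'
    refine ⟨tS, tnI, c, ?_, m, ?_, ?_, hadj, hnadj, hdomf⟩
    · rcases hcm with ⟨rfl, _⟩ | ⟨rfl, _⟩ <;> simp
    · rcases hcm with ⟨_, rfl⟩ | ⟨_, rfl⟩ <;> simp
    · rcases hcm with ⟨rfl, rfl⟩ | ⟨rfl, rfl⟩
      · exact hab
      · exact Ne.symm hab
  | succ k hk ih =>
    intro X' hsub hcard
    have hlt : 1 < X'.card := by omega
    obtain ⟨a, haX, b, hbX, hab⟩ := Finset.one_lt_card.mp hlt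
    obtain ⟨t, c, m, hcm, tS, tnI, hadj, hnadj, hdomf⟩ := getPair _ hsub a haX b hbX hab
    have hcX : c ∈ X' := by rcases hcm with ⟨rfl, _⟩ | ⟨rfl, _⟩ <;> assumption
    have hmX : m ∈ X' := by rcases hcm with ⟨_, rfl⟩ | ⟨_, rfl⟩ <;> assumption
    have hcmne : c ≠ m := by
      rcases hcm with ⟨rfl, rfl⟩ | ⟨rfl, rfl⟩
      · exact hab
      · exact Ne.symm hab
    set X'' := X'.erase m with hX''
    have hsub'' : X'' ⊆ I ∩ (H1 ∪ H2) := (Finset.erase_subset m X').trans hsub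
    have hcard'' : X''.card = k := by
      rw [hX'', Finset.card_erase_of_mem hmX, hcard]
      omega
    obtain ⟨T'', hT''card, hT''⟩ := ih X'' hsub'' hcard''
    have htT : t ∉ T'' := by
      intro htmem
      obtain ⟨_, tnI', c', hc'X, m', hm'X, hcm', hadj', hnadj', hdom'⟩ := hT'' t htmem
      have hmm' : m ≠ m' := by
        intro e
        have : m ∈ X'' := by rw [e]; exact hm'X
        exact Finset.notMem_erase m X' this
      have hmI : m ∈ I := (memX m (hsub hmX)).1
      have hc'I : c' ∈ I := (memX c' (hsub'' hc'X)).1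
      rcases hdom' m hmm' with e | e | hadj'' | hadj''
      · have : m ∈ X'' := by rw [e]; exact hc'X
        exact Finset.notMem_erase m X' this
      · exact tnI (e ▸ hmI)
      · have hc'm : c' ≠ m := by
          intro e'
          have : m ∈ X'' := by rw [← e']; exact hc'X
          exact Finset.notMem_erase m X' this
        exact hI (Finset.mem_coe.mpr hc'I) (Finset.mem_coe.mpr hmI) hc'm hadj''
      · exact hnadj hadj''
    refine ⟨insert t T'', ?_, ?_⟩
    · rw [Finset.card_insert_of_notMem htT]
      omega
    · intro s hs
      rcases Finset.mem_insert.mp hs with rfl | hs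
      · exact ⟨tS, tnI, c, hcX, m, hmX, hcmne, hadj, hnadj, hdomf⟩
      · obtain ⟨sS, snI, c', hc'X, m', hm'X, rest⟩ := hT'' s hs
        exact ⟨sS, snI, c', Finset.erase_subset m X' hc'X, m',
          Finset.erase_subset m X' hm'X, rest⟩

end fin

theorem stmt_5 {V : Type*} [Fintype V] [DecidableEq V] (G : SimpleGraph V)
    (hG : G.IsCritical3) (S H1 H2 I : Finset V)
    (hcut : G.IsVertexCut S) (hmins : S.card = G.conn)
    (hpart : ∀ z : V, z ∉ S ↔ (z ∈ H1 ∨ z ∈ H2))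
    (hdisj : Disjoint H1 H2)
    (hsep : ∀ a ∈ H1, ∀ b ∈ H2, ¬G.Adj a b)
    (h1 : 2 ≤ H1.card) (h2 : 2 ≤ H2.card)
    (hI : G.IsIndepSet' ↑I)
    (p : ℕ) (hp : (I ∩ (H1 ∪ H2)).card = p) (hp3 : 3 ≤ p) :
    p - 1 ≤ (S \ I).card := by
  have hbig : 3 ≤ (I ∩ (H1 ∪ H2)).card := by rw [hp]; exact hp3
  obtain ⟨T, hTcard, hT⟩ := countLemma hG hpart hdisj hsep h1 h2 hI hbig p (by omega)
    (I ∩ (H1 ∪ H2)) (Finset.Subset.refl _) hp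
  have hTsub : T ⊆ S \ I := fun t ht => Finset.mem_sdiff.mpr ⟨(hT t ht).1, (hT t ht).2.1⟩
  have := Finset.card_le_card hTsub
  omega
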